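/- For the triangle C_3 with restraints r_1 = [{1},{1},{1}], r_2 = [{1},{2},{1}], r_3 = [{1},{2},{3}], the inequalities π_{r_1}(C_3,x) < π_{r_2}(C_3,x) < π_{r_3}(C_3,x) hold for all x > 3. -/
import Mathlib

/-- The number of proper `x`-colourings of `G` (colours `1,…,x`) permitted by the restraint `r`,
i.e. proper colourings `c` with `c v ∉ r v` for all `v`. -/
noncomputable def rcount {V : Type} [Fintype V] (G : SimpleGraph V) (r : V → Finset ℕ)
    (x : ℕ) : ℕ := by
  classical
  exact ((Fintype.piFinset fun _ : V => Finset.Icc 1 x).filter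
    (fun c => (∀ v w, G.Adj v w → c v ≠ c w) ∧ ∀ v, c v ∉ r v)).card

noncomputable def Sset (x : ℕ) (r : Fin 3 → Finset ℕ) : Finset (Fin 3 → ℕ) := by
  classical
  exact ((Fintype.piFinset fun _ : Fin 3 => Finset.Icc 1 x).filter
    (fun c => (∀ v w, (⊤ : SimpleGraph (Fin 3)).Adj v w → c v ≠ c w) ∧ ∀ v, c v ∉ r v))

lemma rcount_eq (x : ℕ) (r : Fin 3 → Finset ℕ) :
    rcount (⊤ : SimpleGraph (Fin 3)) r x = (Sset x r).card := by
  unfold rcount Sset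
  congr 1
  ext c
  simp only [Finset.mem_filter, Fintype.mem_piFinset]

lemma mem_Sset (x : ℕ) (r : Fin 3 → Finset ℕ) (c : Fin 3 → ℕ) :
    c ∈ Sset x r ↔
    ((1 ≤ c 0 ∧ c 0 ≤ x) ∧ (1 ≤ c 1 ∧ c 1 ≤ x) ∧ (1 ≤ c 2 ∧ c 2 ≤ x)) ∧
     (c 0 ≠ c 1 ∧ c 0 ≠ c 2 ∧ c 1 ≠ c 2) ∧
     (c 0 ∉ r 0 ∧ c 1 ∉ r 1 ∧ c 2 ∉ r 2) := by
  unfold Sset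
  simp only [Finset.mem_filter, Fintype.mem_piFinset, SimpleGraph.top_adj, Fin.forall_fin_succ,
    Fin.forall_fin_two, Finset.mem_Icc]
  norm_num
  tauto

lemma card_lt_aux {α : Type*} [DecidableEq α] {S T : Finset α} (f : α → α) (d : α) (hd : d ∈ T)
    (hf : ∀ a ∈ S, f a ∈ T ∧ f a ≠ d)
    (hinj : ∀ a ∈ S, ∀ b ∈ S, f a = f b → a = b) : S.card < T.card := by
  have h1 : S.card ≤ (T.erase d).card := by
    apply Finset.card_le_card_of_injOn f
    · intro a ha
      exact Finset.mem_erase.mpr ⟨(hf a ha).2, (hf a ha).1⟩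
    · intro a ha b hb h
      exact hinj a (by simpa using ha) b (by simpa using hb) h
  have h2 := Finset.card_erase_lt_of_mem hd
  omega

theorem stmt15 (x : ℕ) (hx : 3 < x) :
    rcount (⊤ : SimpleGraph (Fin 3)) ![({1} : Finset ℕ), {1}, {1}] x <
        rcount (⊤ : SimpleGraph (Fin 3)) ![({1} : Finset ℕ), {2}, {1}] x ∧
      rcount (⊤ : SimpleGraph (Fin 3)) ![({1} : Finset ℕ), {2}, {1}] x <
        rcount (⊤ : SimpleGraph (Fin 3)) ![({1} : Finset ℕ), {2}, {3}] x := by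
  classical
  rw [rcount_eq, rcount_eq, rcount_eq]
  constructor
  · -- first inequality
    apply card_lt_aux (fun c => ![c 0, if c 1 = 2 then 1 else c 1, c 2]) ![2, 1, 3]
    · rw [mem_Sset]
      simp only [Matrix.cons_val_zero, Matrix.cons_val_one, Matrix.head_cons,
        Matrix.cons_val_two, Matrix.tail_cons, Finset.mem_singleton]
      omega
    · intro a ha
      rw [mem_Sset] at ha
      simp only [Matrix.cons_val_zero, Matrix.cons_val_one, Matrix.head_cons,
        Matrix.cons_val_two, Matrix.tail_cons, Finset.mem_singleton] at ha
      obtain ⟨⟨h0, h1, h2⟩, ⟨d01, d02, d12⟩, n0, n1, n2⟩ := ha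
      constructor
      · rw [mem_Sset]
        simp only [Matrix.cons_val_zero, Matrix.cons_val_one, Matrix.head_cons,
          Matrix.cons_val_two, Matrix.tail_cons, Finset.mem_singleton]
        refine ⟨⟨h0, ?_, h2⟩, ⟨?_, d02, ?_⟩, n0, ?_, n2⟩ <;> split <;> omega
      · intro hcon
        have e0 := congrFun hcon 0
        have e1 := congrFun hcon 1
        have e2 := congrFun hcon 2
        simp only [Matrix.cons_val_zero, Matrix.cons_val_one, Matrix.head_cons,
          Matrix.cons_val_two, Matrix.tail_cons] at e0 e1 e2
        split at e1 <;> omega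
    · intro a ha b hb h
      rw [mem_Sset] at ha hb
      simp only [Matrix.cons_val_zero, Matrix.cons_val_one, Matrix.head_cons,
        Matrix.cons_val_two, Matrix.tail_cons, Finset.mem_singleton] at ha hb
      obtain ⟨⟨ha0, ha1, ha2⟩, ⟨da01, da02, da12⟩, na0, na1, na2⟩ := ha
      obtain ⟨⟨hb0, hb1, hb2⟩, ⟨db01, db02, db12⟩, nb0, nb1, nb2⟩ := hb
      have e0 := congrFun h 0
      have e1 := congrFun h 1
      have e2 := congrFun h 2
      simp only [Matrix.cons_val_zero, Matrix.cons_val_one, Matrix.head_cons,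
        Matrix.cons_val_two, Matrix.tail_cons] at e0 e1 e2
      funext i
      fin_cases i
      · show a 0 = b 0; exact e0
      · show a 1 = b 1
        split at e1 <;> split at e1 <;> omega
      · show a 2 = b 2; exact e2
  · -- second inequality
    apply card_lt_aux
      (fun c => if c 2 = 3 then ![c 0, if c 1 = 1 then 3 else c 1, 1] else c) ![3, 4, 1]
    · rw [mem_Sset]
      simp only [Matrix.cons_val_zero, Matrix.cons_val_one, Matrix.head_cons,
        Matrix.cons_val_two, Matrix.tail_cons, Finset.mem_singleton]
      omega
    · intro a ha
      rw [mem_Sset] at ha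
      simp only [Matrix.cons_val_zero, Matrix.cons_val_one, Matrix.head_cons,
        Matrix.cons_val_two, Matrix.tail_cons, Finset.mem_singleton] at ha
      obtain ⟨⟨h0, h1, h2⟩, ⟨d01, d02, d12⟩, n0, n1, n2⟩ := ha
      by_cases hc : a 2 = 3
      · constructor
        · rw [mem_Sset]
          simp only [hc, if_true, Matrix.cons_val_zero, Matrix.cons_val_one, Matrix.head_cons,
            Matrix.cons_val_two, Matrix.tail_cons, Finset.mem_singleton]
          refine ⟨⟨h0, ?_, by omega⟩, ⟨?_, by omega, ?_⟩, n0, ?_, by omega⟩ <;> split <;> omega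
        · intro hcon
          simp only [hc, if_true] at hcon
          have e0 := congrFun hcon 0
          simp only [Matrix.cons_val_zero] at e0
          omega
      · constructor
        · rw [mem_Sset]
          simp only [if_neg hc, Matrix.cons_val_zero, Matrix.cons_val_one, Matrix.head_cons,
            Matrix.cons_val_two, Matrix.tail_cons, Finset.mem_singleton]
          exact ⟨⟨h0, h1, h2⟩, ⟨d01, d02, d12⟩, n0, n1, by omega⟩
        · intro hcon
          simp only [if_neg hc] at hcon
          have e2 := congrFun hcon 2
          simp only [Matrix.cons_val_two, Matrix.tail_cons, Matrix.head_cons] at e2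
          omega
    · intro a ha b hb h
      rw [mem_Sset] at ha hb
      simp only [Matrix.cons_val_zero, Matrix.cons_val_one, Matrix.head_cons,
        Matrix.cons_val_two, Matrix.tail_cons, Finset.mem_singleton] at ha hb
      obtain ⟨⟨ha0, ha1, ha2⟩, ⟨da01, da02, da12⟩, na0, na1, na2⟩ := ha
      obtain ⟨⟨hb0, hb1, hb2⟩, ⟨db01, db02, db12⟩, nb0, nb1, nb2⟩ := hb
      by_cases hca : a 2 = 3 <;> by_cases hcb : b 2 = 3
      · simp only [hca, hcb, if_true] at h
        have e0 := congrFun h 0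
        have e1 := congrFun h 1
        simp only [Matrix.cons_val_zero, Matrix.cons_val_one, Matrix.head_cons] at e0 e1
        funext i
        fin_cases i
        · show a 0 = b 0; exact e0
        · show a 1 = b 1
          split at e1 <;> split at e1 <;> omega
        · show a 2 = b 2; omega
      · simp only [if_pos hca, if_neg hcb] at h
        have e2 := congrFun h 2
        simp only [Matrix.cons_val_two, Matrix.tail_cons, Matrix.head_cons] at e2
        omega
      · simp only [if_neg hca, if_pos hcb] at h
        have e2 := congrFun h.symm 2
        simp only [Matrix.cons_val_two, Matrix.tail_cons, Matrix.head_cons] at e2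
        omega
      · simpa [if_neg hca, if_neg hcb] using h
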